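/- There exists an absolute constant c ≥ 1 such that for every a with 0 ≤ a ≤ 1 and every v > 0 satisfying a·v ≤ 1, c⁻¹ · (1 − a)/((v + 1)^{3/2} · (1 + log(v + 1))) ≤ ∫_a^1 e^{−v·u} · u^{1/2}/(1 − log u) du ≤ c · (1 − a)/((v + 1)^{3/2} · (1 + log(v + 1))). -/

import Mathlib

open MeasureTheory Real

namespace Stmt6

noncomputable def f (v u : ℝ) : ℝ := Real.exp (-(v * u)) * Real.sqrt u / (1 - Real.log u)

lemma one_le_one_sub_log {u : ℝ} (h0 : 0 < u) (h1 : u ≤ 1) : 1 ≤ 1 - Real.log u := by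
  have := Real.log_nonpos h0.le h1; linarith

lemma f_nonneg {v u : ℝ} (h0 : 0 < u) (h1 : u ≤ 1) : 0 ≤ f v u := by
  have h := one_le_one_sub_log h0 h1
  have h2 : 0 ≤ Real.exp (-(v*u)) * Real.sqrt u :=
    mul_nonneg (Real.exp_pos _).le (Real.sqrt_nonneg _)
  exact div_nonneg h2 (by linarith)

lemma f_le_one {v u : ℝ} (hv : 0 ≤ v) (h0 : 0 < u) (h1 : u ≤ 1) : f v u ≤ 1 := by
  have h := one_le_one_sub_log h0 h1
  have he : Real.exp (-(v*u)) ≤ 1 := Real.exp_le_one_iff.2 (by nlinarith)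
  have hs : Real.sqrt u ≤ 1 := by
    rw [show (1:ℝ) = Real.sqrt 1 by simp]
    exact Real.sqrt_le_sqrt h1
  have hs0 : 0 ≤ Real.sqrt u := Real.sqrt_nonneg _
  rw [f, div_le_one (by linarith)]
  nlinarith

lemma f_meas (v : ℝ) : Measurable (f v) := by
  unfold f
  exact ((Real.measurable_exp.comp ((measurable_const.mul measurable_id').neg)).mul
    Real.continuous_sqrt.measurable).div (measurable_const.sub Real.measurable_log)

lemma f_integrableOn {v : ℝ} (hv : 0 ≤ v) {s : Set ℝ} (hm : MeasurableSet s)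
    (hs : s ⊆ Set.Ioc 0 1) : IntegrableOn (f v) s := by
  refine Integrable.mono' (g := fun _ => (1:ℝ))
    (integrableOn_const ((measure_mono hs).trans_lt measure_Ioc_lt_top).ne)
    ((f_meas v).aestronglyMeasurable.restrict) ?_
  rw [ae_restrict_iff' hm]
  refine .of_forall fun u hu => ?_
  have h1 := hs hu
  rw [Real.norm_eq_abs, abs_le]
  exact ⟨by simpa using (by linarith [f_nonneg (v := v) h1.1 h1.2] : (-1:ℝ) ≤ f v u), f_le_one hv h1.1 h1.2⟩


lemma sq_le_exp' {t : ℝ} (ht : 0 ≤ t) : t^2 ≤ Real.exp t := by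
  have h2 := Real.add_one_le_exp (t/4)
  have h3 : Real.exp (t/4) * Real.exp (t/4) = Real.exp (t/2) := by
    rw [← Real.exp_add]; ring_nf
  have h1 : t ≤ Real.exp (t/2) := by nlinarith [sq_nonneg (1 - t/4)]
  have h4 : Real.exp (t/2) * Real.exp (t/2) = Real.exp t := by
    rw [← Real.exp_add]; ring_nf
  nlinarith [Real.exp_pos (t/2)]

lemma cube_le_exp {t : ℝ} (ht : 0 ≤ t) : t^3 ≤ 27 * Real.exp t := by
  have h2 := Real.add_one_le_exp (t/3)
  have h1 : t ≤ 3 * Real.exp (t/3) := by linarith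
  have h4 : Real.exp (t/3) * Real.exp (t/3) * Real.exp (t/3) = Real.exp t := by
    rw [← Real.exp_add, ← Real.exp_add]; ring_nf
  nlinarith [Real.exp_pos (t/3), pow_le_pow_left₀ ht h1 3]

lemma core {L t : ℝ} (hL : 0 ≤ L) (ht1 : 1 ≤ t) (htv : Real.log t ≤ L) :
    Real.exp (-t) * t^2 * (1 + L) ≤ 81 * (1 + L - Real.log t) := by
  have ht0 : (0:ℝ) < t := by linarith
  have hlt : 0 ≤ Real.log t := Real.log_nonneg ht1
  have hE : Real.exp (-t) * Real.exp t = 1 := by rw [← Real.exp_add]; simp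
  have hEp : 0 < Real.exp t := Real.exp_pos t
  have h2 : Real.exp (-t) * t^2 ≤ 1 := by
    have := sq_le_exp' ht0.le
    calc Real.exp (-t) * t^2 ≤ Real.exp (-t) * Real.exp t := by
          exact mul_le_mul_of_nonneg_left this (Real.exp_pos _).le
      _ = 1 := hE
  rcases le_or_gt (2 * Real.log t) L with hc | hc
  · nlinarith [mul_nonneg (mul_nonneg (Real.exp_pos (-t)).le (sq_nonneg t)) hL]
  · have hLt : L ≤ 2 * t := by
      have := Real.log_le_sub_one_of_pos ht0; nlinarith
    have h3 : Real.exp (-t) * t^3 ≤ 27 := by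
      have := cube_le_exp ht0.le
      calc Real.exp (-t) * t^3 ≤ Real.exp (-t) * (27 * Real.exp t) := by
            exact mul_le_mul_of_nonneg_left this (Real.exp_pos _).le
        _ = 27 := by rw [mul_comm (27:ℝ), ← mul_assoc, hE, one_mul]
    nlinarith [mul_nonneg (Real.exp_pos (-t)).le (sq_nonneg t),
      mul_nonneg (Real.exp_pos (-t)).le (pow_nonneg ht0.le 3)]

lemma rpow32 {x : ℝ} (hx : 0 ≤ x) : x ^ ((3:ℝ)/2) = x * Real.sqrt x := by
  rw [show (3:ℝ)/2 = 1 + 1/2 by norm_num, Real.rpow_add' hx (by norm_num),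
    Real.rpow_one, ← Real.sqrt_eq_rpow]


lemma lower_piece {a v s t m : ℝ} (hv : 0 ≤ v) (ha : 0 ≤ a) (has : a ≤ s) (hst : s ≤ t)
    (ht1 : t ≤ 1) (hm0 : 0 ≤ m) (hm : ∀ u ∈ Set.Ioc s t, m ≤ f v u) :
    m * (t - s) ≤ ∫ u in Set.Ioc a 1, f v u := by
  have h0s : 0 ≤ s := ha.trans has
  have hsub : Set.Ioc s t ⊆ Set.Ioc 0 1 := Set.Ioc_subset_Ioc h0s ht1
  have h1 : m * (t - s) ≤ ∫ u in Set.Ioc s t, f v u := by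
    have := setIntegral_ge_of_const_le (μ := volume) (s := Set.Ioc s t) measurableSet_Ioc
      measure_Ioc_lt_top.ne hm (f_integrableOn hv measurableSet_Ioc hsub)
    rwa [Real.volume_real_Ioc_of_le hst, smul_eq_mul, mul_comm] at this
  refine h1.trans (setIntegral_mono_set
    (f_integrableOn hv measurableSet_Ioc (Set.Ioc_subset_Ioc ha le_rfl)) ?_ ?_)
  · rw [Filter.EventuallyLE, ae_restrict_iff' measurableSet_Ioc]
    refine .of_forall fun u hu => ?_
    simpa using f_nonneg (v := v) (lt_of_le_of_lt ha hu.1) hu.2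
  · exact (Set.Ioc_subset_Ioc has ht1).eventuallyLE

lemma upper_one {a v : ℝ} (ha : 0 ≤ a) (ha1 : a ≤ 1) (hv : 0 ≤ v) :
    ∫ u in Set.Ioc a 1, f v u ≤ 1 - a := by
  have h := setIntegral_mono_on
    (f_integrableOn hv measurableSet_Ioc (Set.Ioc_subset_Ioc ha le_rfl))
    (integrableOn_const measure_Ioc_lt_top.ne) measurableSet_Ioc
    (fun u hu => f_le_one hv (lt_of_le_of_lt ha hu.1) hu.2)
  rw [setIntegral_const, Real.volume_real_Ioc_of_le ha1, smul_eq_mul,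
    mul_one] at h
  exact h


lemma upper_big {a v : ℝ} (ha : 0 ≤ a) (hv : 2 ≤ v) :
    ∫ u in Set.Ioc a 1, f v u ≤ 163 / (v * Real.sqrt v * (1 + Real.log v)) := by
  have hv0 : (0:ℝ) < v := by linarith
  have hv0' : (0:ℝ) ≤ v := hv0.le
  have hb0 : (0:ℝ) < 1/v := by positivity
  have hb1 : 1/v ≤ 1 := by rw [div_le_one hv0]; linarith
  have hL0 : 0 ≤ Real.log v := Real.log_nonneg (by linarith)
  have hL1 : (0:ℝ) < 1 + Real.log v := by linarith
  have hS0 : 0 < Real.sqrt v := Real.sqrt_pos.2 hv0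
  have hSS : Real.sqrt v * Real.sqrt v = v := Real.mul_self_sqrt hv0.le
  have step1 : ∫ u in Set.Ioc a 1, f v u ≤ ∫ u in Set.Ioc 0 1, f v u := by
    refine setIntegral_mono_set (f_integrableOn hv0' measurableSet_Ioc (subset_refl _)) ?_
      (Set.Ioc_subset_Ioc ha le_rfl).eventuallyLE
    rw [Filter.EventuallyLE, ae_restrict_iff' measurableSet_Ioc]
    refine .of_forall fun u hu => ?_
    simpa using f_nonneg (v := v) hu.1 hu.2
  have hsplit : ∫ u in Set.Ioc 0 1, f v u
      = (∫ u in Set.Ioc 0 (1/v), f v u) + ∫ u in Set.Ioc (1/v) 1, f v u := by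
    rw [← setIntegral_union (Set.Ioc_disjoint_Ioc_of_le le_rfl) measurableSet_Ioc
      (f_integrableOn hv0' measurableSet_Ioc (Set.Ioc_subset_Ioc le_rfl hb1))
      (f_integrableOn hv0' measurableSet_Ioc (Set.Ioc_subset_Ioc hb0.le le_rfl)),
      Set.Ioc_union_Ioc_eq_Ioc hb0.le hb1]
  -- piece 1
  have p1 : ∫ u in Set.Ioc 0 (1/v), f v u
      ≤ (2/3) * ((1/v) * Real.sqrt (1/v)) / (1 + Real.log v) := by
    have hmono : ∀ u ∈ Set.Ioc 0 (1/v), f v u ≤ Real.sqrt u / (1 + Real.log v) := by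
      intro u hu
      have hu0 : 0 < u := hu.1
      have hu1 : u ≤ 1 := hu.2.trans hb1
      have hlog : Real.log u ≤ -Real.log v := by
        have := Real.log_le_log hu0 hu.2
        rwa [one_div, Real.log_inv] at this
      have he : Real.exp (-(v*u)) ≤ 1 := Real.exp_le_one_iff.2 (by nlinarith)
      have hsn : 0 ≤ Real.sqrt u := Real.sqrt_nonneg u
      rw [f, div_le_div_iff₀ (by nlinarith [one_le_one_sub_log hu0 hu1]) hL1]
      nlinarith [mul_le_mul_of_nonneg_right he (mul_nonneg hsn hL1.le),
        mul_le_mul_of_nonneg_left (show 1 + Real.log v ≤ 1 - Real.log u by linarith) hsn]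
    have hint2 : IntegrableOn (fun u => Real.sqrt u / (1 + Real.log v)) (Set.Ioc 0 (1/v)) :=
      (Real.continuous_sqrt.div_const _).integrableOn_Ioc
    have h := setIntegral_mono_on
      (f_integrableOn hv0' measurableSet_Ioc (Set.Ioc_subset_Ioc le_rfl hb1))
      hint2 measurableSet_Ioc hmono
    have hc : ∫ u in Set.Ioc 0 (1/v), Real.sqrt u / (1 + Real.log v)
        = (∫ u in Set.Ioc 0 (1/v), Real.sqrt u) / (1 + Real.log v) := integral_div _ _
    have hc2 : ∫ u in Set.Ioc 0 (1/v), Real.sqrt u = (2/3) * ((1/v) * Real.sqrt (1/v)) := by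
      rw [← intervalIntegral.integral_of_le hb0.le]
      have heq : ∫ u in (0:ℝ)..(1/v), Real.sqrt u = ∫ u in (0:ℝ)..(1/v), u ^ ((1:ℝ)/2) := by
        simp_rw [Real.sqrt_eq_rpow]
      rw [heq, integral_rpow (Or.inl (by norm_num)),
        Real.zero_rpow (by norm_num : (1:ℝ)/2 + 1 ≠ 0),
        show (1:ℝ)/2 + 1 = (3:ℝ)/2 by norm_num, rpow32 hb0.le]
      ring
    rw [hc, hc2] at h
    exact h
  -- piece 2
  have p2 : ∫ u in Set.Ioc (1/v) 1, f v u
      ≤ 81 / ((1 + Real.log v) * (v*v)) * (2 * (Real.sqrt v - 1)) := by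
    have hmono : ∀ u ∈ Set.Ioc (1/v) 1, f v u
        ≤ 81 / ((1 + Real.log v) * (v*v)) * u ^ (-(3:ℝ)/2) := by
      intro u hu
      have hu0 : 0 < u := hb0.trans hu.1
      have hu1 : u ≤ 1 := hu.2
      have hu2 : Real.sqrt u * Real.sqrt u = u := Real.mul_self_sqrt hu0.le
      have husq : 0 ≤ Real.sqrt u := Real.sqrt_nonneg u
      have ht1 : 1 ≤ v * u := by
        have h := hu.1
        rw [div_lt_iff₀ hv0] at h
        nlinarith
      have htv : Real.log (v*u) ≤ Real.log v := Real.log_le_log (by linarith) (by nlinarith)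
      have hcore := core hL0 ht1 htv
      have hlogmul : Real.log (v*u) = Real.log v + Real.log u :=
        Real.log_mul (by positivity) (by positivity)
      have hcore' : Real.exp (-(v*u)) * (v*u)^2 * (1 + Real.log v)
          ≤ 81 * (1 - Real.log u) := by
        rw [hlogmul] at hcore
        linarith [hcore]
      have hden : (0:ℝ) < 1 - Real.log u := by
        have := one_le_one_sub_log hu0 hu1; linarith
      have hrpow : u ^ (-(3:ℝ)/2) = (u * Real.sqrt u)⁻¹ := by
        rw [show (-(3:ℝ)/2) = -((3:ℝ)/2) by norm_num, Real.rpow_neg hu0.le, rpow32 hu0.le]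
      rw [f, hrpow, ← div_eq_mul_inv, div_div,
        div_le_div_iff₀ hden (by positivity)]
      have expand : Real.exp (-(v*u)) * Real.sqrt u * ((1 + Real.log v) * (v*v) * (u * Real.sqrt u))
          = Real.exp (-(v*u)) * (v*u)^2 * (1 + Real.log v) := by
        linear_combination (Real.exp (-(v*u)) * (1 + Real.log v) * (v*v) * u) * hu2
      rw [expand]
      exact hcore'
    have hnm : (0:ℝ) ∉ Set.uIcc (1/v) 1 := Set.notMem_uIcc_of_lt hb0 one_pos
    have hrint : IntervalIntegrable (fun u : ℝ => u ^ (-(3:ℝ)/2)) volume (1/v) 1 :=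
      intervalIntegral.intervalIntegrable_rpow (Or.inr hnm)
    have hIoc : IntegrableOn (fun u : ℝ => u ^ (-(3:ℝ)/2)) (Set.Ioc (1/v) 1) :=
      (intervalIntegrable_iff_integrableOn_Ioc_of_le hb1).1 hrint
    have hint2 : IntegrableOn
        (fun u : ℝ => 81 / ((1 + Real.log v) * (v*v)) * u ^ (-(3:ℝ)/2)) (Set.Ioc (1/v) 1) :=
      hIoc.const_mul _
    have h := setIntegral_mono_on
      (f_integrableOn hv0' measurableSet_Ioc (Set.Ioc_subset_Ioc hb0.le le_rfl))
      hint2 measurableSet_Ioc hmono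
    have hc : ∫ u in Set.Ioc (1/v) 1, 81 / ((1 + Real.log v) * (v*v)) * u ^ (-(3:ℝ)/2)
        = 81 / ((1 + Real.log v) * (v*v)) * ∫ u in Set.Ioc (1/v) 1, u ^ (-(3:ℝ)/2) :=
      integral_const_mul _ _
    have hc2 : ∫ u in Set.Ioc (1/v) 1, u ^ (-(3:ℝ)/2) = 2 * (Real.sqrt v - 1) := by
      rw [← intervalIntegral.integral_of_le hb1, integral_rpow (Or.inr ⟨by norm_num, hnm⟩)]
      rw [Real.one_rpow,
        show (1/v : ℝ) ^ (-(3:ℝ)/2 + 1) = Real.sqrt v by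
          rw [show (-(3:ℝ)/2 + 1) = -(1/2 : ℝ) by norm_num, Real.rpow_neg hb0.le,
            ← Real.sqrt_eq_rpow, one_div, Real.sqrt_inv, inv_inv]]
      ring
    rw [hc, hc2] at h
    exact h
  -- assemble
  have hP : 0 < v * Real.sqrt v * (1 + Real.log v) := by positivity
  have e1 : (2/3) * ((1/v) * Real.sqrt (1/v)) / (1 + Real.log v)
      = (2/3) / (v * Real.sqrt v * (1 + Real.log v)) := by
    rw [one_div, Real.sqrt_inv]
    field_simp
  have hv2 : v * v = (v * Real.sqrt v) * Real.sqrt v := by linear_combination (-v) * hSS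
  have e2 : 81 / ((1 + Real.log v) * (v*v)) * (2 * (Real.sqrt v - 1))
      ≤ 162 / (v * Real.sqrt v * (1 + Real.log v)) := by
    have e2' : 81 / ((1 + Real.log v) * (v*v)) * (2 * (Real.sqrt v - 1))
        = (162 * (Real.sqrt v - 1)) / ((v * Real.sqrt v * (1 + Real.log v)) * Real.sqrt v) := by
      rw [hv2]; ring
    rw [e2', div_le_div_iff₀ (by positivity) hP]
    nlinarith [mul_pos hP hS0, hP]
  have efin : (2/3) / (v * Real.sqrt v * (1 + Real.log v))
      + 162 / (v * Real.sqrt v * (1 + Real.log v))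
      ≤ 163 / (v * Real.sqrt v * (1 + Real.log v)) := by
    rw [← add_div]
    gcongr
    norm_num
  calc ∫ u in Set.Ioc a 1, f v u ≤ ∫ u in Set.Ioc 0 1, f v u := step1
    _ = (∫ u in Set.Ioc 0 (1/v), f v u) + ∫ u in Set.Ioc (1/v) 1, f v u := hsplit
    _ ≤ (2/3) / (v * Real.sqrt v * (1 + Real.log v))
        + 162 / (v * Real.sqrt v * (1 + Real.log v)) := by
      rw [← e1]; exact add_le_add p1 (p2.trans e2)
    _ ≤ 163 / (v * Real.sqrt v * (1 + Real.log v)) := efin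

end Stmt6

set_option maxHeartbeats 1000000 in
theorem stmt_6 :
    ∃ c : ℝ, 1 ≤ c ∧ ∀ a v : ℝ, 0 ≤ a → a ≤ 1 → 0 < v → a * v ≤ 1 →
      c⁻¹ * ((1 - a) / ((v + 1) ^ ((3:ℝ)/2) * (1 + Real.log (v + 1))))
        ≤ (∫ u in Set.Ioc a 1, Real.exp (-(v * u)) * Real.sqrt u / (1 - Real.log u)) ∧
      (∫ u in Set.Ioc a 1, Real.exp (-(v * u)) * Real.sqrt u / (1 - Real.log u))
        ≤ c * ((1 - a) / ((v + 1) ^ ((3:ℝ)/2) * (1 + Real.log (v + 1)))) := by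
  refine ⟨4000, by norm_num, fun a v ha0 ha1 hv hav => ?_⟩
  have hv0' : (0:ℝ) ≤ v := hv.le
  have hvp1 : (0:ℝ) < v + 1 := by linarith
  have hL1 : 0 ≤ Real.log (v+1) := Real.log_nonneg (by linarith)
  have hrw : (v+1) ^ ((3:ℝ)/2) = (v+1) * Real.sqrt (v+1) := Stmt6.rpow32 hvp1.le
  have hS1 : 1 ≤ Real.sqrt (v+1) := by
    have h := Real.sqrt_le_sqrt (show (1:ℝ) ≤ v + 1 by linarith)
    rwa [Real.sqrt_one] at h
  have hSp1 : 0 < Real.sqrt (v+1) := by linarith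
  have hDpos : 0 < (v+1) * Real.sqrt (v+1) * (1 + Real.log (v+1)) := by positivity
  have hIeq : (∫ u in Set.Ioc a 1, Real.exp (-(v * u)) * Real.sqrt u / (1 - Real.log u))
      = ∫ u in Set.Ioc a 1, Stmt6.f v u := rfl
  have hE2 : Real.exp 2 ≤ 8 := by
    have h1 := Real.exp_one_lt_d9
    have h2 : Real.exp 2 = Real.exp 1 * Real.exp 1 := by
      rw [← Real.exp_add]; norm_num
    nlinarith [Real.exp_pos 1]
  have hE2' : (1:ℝ)/8 ≤ Real.exp (-2) := by
    rw [Real.exp_neg, ← one_div, div_le_div_iff₀ (by norm_num) (Real.exp_pos 2)]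
    linarith
  have h1ann : 0 ≤ 1 - a := by linarith
  rw [hIeq, hrw]
  rcases le_or_gt v 2 with hv2 | hv2
  · -- small v
    constructor
    · -- lower bound, small v
      have hm0 : (0:ℝ) ≤ Real.exp (-2) / 4 := by positivity
      have hkey := Stmt6.lower_piece (a := a) (v := v) (s := max a (1/2)) (t := 1)
        hv0' ha0 (le_max_left _ _) (max_le ha1 (by norm_num)) le_rfl hm0 ?_
      · have h1s : (1-a)/2 ≤ 1 - max a (1/2) := by
          rcases le_total a (1/2) with h | h
          · rw [max_eq_right h]; linarith
          · rw [max_eq_left h]; linarith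
        have hD1 : 1 ≤ (v+1) * Real.sqrt (v+1) * (1 + Real.log (v+1)) := by
          have hA : (1:ℝ) ≤ (v+1) * Real.sqrt (v+1) := by
            have := mul_le_mul (show (1:ℝ) ≤ v+1 by linarith) hS1 zero_le_one (by linarith)
            linarith
          nlinarith [mul_le_mul hA (show (1:ℝ) ≤ 1 + Real.log (v+1) by linarith)
            zero_le_one (by linarith : (0:ℝ) ≤ (v+1) * Real.sqrt (v+1))]
        have hstep : (1-a) / ((v+1) * Real.sqrt (v+1) * (1 + Real.log (v+1))) ≤ 1 - a :=
          div_le_self h1ann hD1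
        have hchain : Real.exp (-2)/4 * ((1-a)/2) ≤ Real.exp (-2)/4 * (1 - max a (1/2)) :=
          mul_le_mul_of_nonneg_left h1s hm0
        rw [inv_mul_eq_div, div_le_iff₀ (by norm_num : (0:ℝ) < 4000)]
        calc (1-a) / ((v+1) * Real.sqrt (v+1) * (1 + Real.log (v+1))) ≤ 1 - a := hstep
          _ ≤ (Real.exp (-2)/4 * ((1-a)/2)) * 4000 := by
              nlinarith [mul_le_mul_of_nonneg_right hE2' h1ann]
          _ ≤ (Real.exp (-2)/4 * (1 - max a (1/2))) * 4000 := by linarith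
          _ ≤ (∫ u in Set.Ioc a 1, Stmt6.f v u) * 4000 := by linarith
      · intro u hu
        have hhalf : 1/2 < u := lt_of_le_of_lt (le_max_right a (1/2)) hu.1
        have hu0 : (0:ℝ) < u := by linarith
        have hu1 : u ≤ 1 := hu.2
        have hsq : 1/2 ≤ Real.sqrt u := by
          have h1 : Real.sqrt (1/4) ≤ Real.sqrt u := Real.sqrt_le_sqrt (by linarith)
          have h2 : Real.sqrt (1/4 : ℝ) = 1/2 := by
            rw [show (1/4:ℝ) = (1/2)^2 by norm_num, Real.sqrt_sq (by norm_num)]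
          linarith
        have hlog2 : Real.log 2 ≤ 1 := by
          have := Real.log_le_sub_one_of_pos (by norm_num : (0:ℝ) < 2); linarith
        have hlogu : -1 ≤ Real.log u := by
          have h1 : Real.log (1/2) ≤ Real.log u := Real.log_le_log (by norm_num) (by linarith)
          rw [one_div, Real.log_inv] at h1
          linarith
        have hden : 0 < 1 - Real.log u := by
          have := Stmt6.one_le_one_sub_log hu0 hu1; linarith
        have hexp : Real.exp (-2) ≤ Real.exp (-(v*u)) := by
          apply Real.exp_le_exp.2; nlinarith
        rw [Stmt6.f, le_div_iff₀ hden]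
        have hB : Real.exp (-2) * (1/2) ≤ Real.exp (-(v*u)) * Real.sqrt u :=
          mul_le_mul hexp hsq (by norm_num) (Real.exp_pos _).le
        nlinarith [Real.exp_pos (-2)]
    · -- upper bound, small v
      have h := Stmt6.upper_one ha0 ha1 hv0'
      have hs3 : Real.sqrt (v+1) ≤ 2 := by
        have h1 : Real.sqrt (v+1) ≤ Real.sqrt 4 := Real.sqrt_le_sqrt (by linarith)
        have h2 : Real.sqrt (4:ℝ) = 2 := by
          rw [show (4:ℝ) = 2^2 by norm_num, Real.sqrt_sq (by norm_num)]
        linarith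
      have hlog3 : Real.log (v+1) ≤ 2 := by
        have := Real.log_le_sub_one_of_pos hvp1; linarith
      have hD18 : (v+1) * Real.sqrt (v+1) * (1 + Real.log (v+1)) ≤ 18 := by
        have hA : (v+1) * Real.sqrt (v+1) ≤ 6 := by
          have := mul_le_mul (show v+1 ≤ 3 by linarith) hs3 hSp1.le (by norm_num : (0:ℝ) ≤ 3)
          linarith
        nlinarith [mul_le_mul hA (show 1 + Real.log (v+1) ≤ 3 by linarith)
          (by linarith : (0:ℝ) ≤ 1 + Real.log (v+1)) (by norm_num : (0:ℝ) ≤ 6)]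
      have hdiv : (1-a)/18 ≤ (1-a) / ((v+1) * Real.sqrt (v+1) * (1 + Real.log (v+1))) := by
        rw [div_le_div_iff₀ (by norm_num) hDpos]
        exact mul_le_mul_of_nonneg_left hD18 h1ann
      calc (∫ u in Set.Ioc a 1, Stmt6.f v u) ≤ 1 - a := h
        _ ≤ 4000 * ((1-a)/18) := by linarith
        _ ≤ 4000 * ((1-a) / ((v+1) * Real.sqrt (v+1) * (1 + Real.log (v+1)))) := by linarith
  · -- big v
    have hv0 : (0:ℝ) < v := hv
    have hva : a ≤ 1/v := by rw [le_div_iff₀ hv0]; linarith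
    have hbv : (0:ℝ) < 1/v := by positivity
    have h2v1 : 2/v ≤ 1 := by rw [div_le_one hv0]; linarith
    have ha2 : a ≤ 1/2 := by
      have : (1:ℝ)/v ≤ 1/2 := by rw [div_le_div_iff₀ hv0 (by norm_num)]; linarith
      linarith
    have h1a : (1:ℝ)/2 ≤ 1 - a := by linarith
    have hS0 : 0 < Real.sqrt v := Real.sqrt_pos.2 hv0
    have hSS : Real.sqrt v * Real.sqrt v = v := Real.mul_self_sqrt hv0.le
    have hSv1 : 1 ≤ Real.sqrt v := by
      rw [show (1:ℝ) = Real.sqrt 1 by simp]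
      exact Real.sqrt_le_sqrt (by linarith)
    have hlogv0 : 0 ≤ Real.log v := Real.log_nonneg (by linarith)
    have hlogv1 : Real.log v ≤ Real.log (v+1) := Real.log_le_log hv0 (by linarith)
    have hPpos : 0 < v * Real.sqrt v * (1 + Real.log v) := by positivity
    have hPD : v * Real.sqrt v * (1 + Real.log v)
        ≤ (v+1) * Real.sqrt (v+1) * (1 + Real.log (v+1)) := by
      have h1 : Real.sqrt v ≤ Real.sqrt (v+1) := Real.sqrt_le_sqrt (by linarith)
      have hA : v * Real.sqrt v ≤ (v+1) * Real.sqrt (v+1) :=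
        mul_le_mul (by linarith) h1 hS0.le (by linarith)
      nlinarith [mul_le_mul hA (show 1 + Real.log v ≤ 1 + Real.log (v+1) by linarith)
        (by linarith : (0:ℝ) ≤ 1 + Real.log v)
        (by positivity : (0:ℝ) ≤ (v+1) * Real.sqrt (v+1))]
    constructor
    · -- lower bound, big v
      have hm0 : (0:ℝ) ≤ Real.exp (-2) / (Real.sqrt v * (1 + Real.log v)) := by positivity
      have hkey := Stmt6.lower_piece (a := a) (v := v) (s := 1/v) (t := 2/v)
        hv0' ha0 hva (by gcongr <;> norm_num) h2v1 hm0 ?_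
      · have heq : Real.exp (-2) / (Real.sqrt v * (1 + Real.log v)) * (2/v - 1/v)
            = Real.exp (-2) / (v * Real.sqrt v * (1 + Real.log v)) := by
          field_simp
          ring
        rw [heq] at hkey
        have hdiv : (1-a) / ((v+1) * Real.sqrt (v+1) * (1 + Real.log (v+1)))
            ≤ 1 / (v * Real.sqrt v * (1 + Real.log v)) := by
          gcongr
          linarith
        rw [inv_mul_eq_div, div_le_iff₀ (by norm_num : (0:ℝ) < 4000)]
        calc (1-a) / ((v+1) * Real.sqrt (v+1) * (1 + Real.log (v+1)))
            ≤ 1 / (v * Real.sqrt v * (1 + Real.log v)) := hdiv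
          _ ≤ (Real.exp (-2) / (v * Real.sqrt v * (1 + Real.log v))) * 4000 := by
              rw [div_mul_eq_mul_div, div_le_div_iff₀ hPpos hPpos]
              nlinarith [hPpos, mul_le_mul_of_nonneg_right hE2' hPpos.le]
          _ ≤ (∫ u in Set.Ioc a 1, Stmt6.f v u) * 4000 := by linarith
      · intro u hu
        have hu0 : (0:ℝ) < u := lt_trans hbv hu.1
        have hu1 : u ≤ 1 := hu.2.trans h2v1
        have hvu2 : v * u ≤ 2 := by
          have h := hu.2
          rw [le_div_iff₀ hv0] at h
          linarith [h]
        have hexp : Real.exp (-2) ≤ Real.exp (-(v*u)) := by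
          apply Real.exp_le_exp.2; linarith
        have hsu : (Real.sqrt v)⁻¹ ≤ Real.sqrt u := by
          have h1 : Real.sqrt (1/v) ≤ Real.sqrt u := Real.sqrt_le_sqrt hu.1.le
          rwa [one_div, Real.sqrt_inv] at h1
        have hlogu : 1 - Real.log u ≤ 1 + Real.log v := by
          have h1 : Real.log (1/v) ≤ Real.log u := Real.log_le_log hbv hu.1.le
          rw [one_div, Real.log_inv] at h1
          linarith
        have hden : 0 < 1 - Real.log u := by
          have := Stmt6.one_le_one_sub_log hu0 hu1; linarith
        rw [Stmt6.f, le_div_iff₀ hden]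
        have hL1v : 0 < 1 + Real.log v := by linarith
        have hmono : Real.exp (-2) / (Real.sqrt v * (1 + Real.log v)) * (1 - Real.log u)
            ≤ Real.exp (-2) / (Real.sqrt v * (1 + Real.log v)) * (1 + Real.log v) := by
          apply mul_le_mul_of_nonneg_left hlogu (by positivity)
        have heq2 : Real.exp (-2) / (Real.sqrt v * (1 + Real.log v)) * (1 + Real.log v)
            = Real.exp (-2) * (Real.sqrt v)⁻¹ := by
          field_simp
        have hB : Real.exp (-2) * (Real.sqrt v)⁻¹ ≤ Real.exp (-(v*u)) * Real.sqrt u :=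
          mul_le_mul hexp hsu (by positivity) (Real.exp_pos _).le
        linarith
    · -- upper bound, big v
      have h := Stmt6.upper_big ha0 hv2.le
      have hs2v : Real.sqrt (v+1) ≤ 3/2 * Real.sqrt v := by
        have h1 : Real.sqrt (v+1) ≤ Real.sqrt (2*v) := Real.sqrt_le_sqrt (by linarith)
        have h2 : Real.sqrt (2*v) = Real.sqrt 2 * Real.sqrt v :=
          Real.sqrt_mul (by norm_num) v
        have h3 : Real.sqrt 2 ≤ 3/2 := by
          have h4 : Real.sqrt (2:ℝ) ≤ Real.sqrt ((3/2)^2) := Real.sqrt_le_sqrt (by norm_num)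
          rwa [Real.sqrt_sq (by norm_num)] at h4
        nlinarith
      have hlog2v : 1 + Real.log (v+1) ≤ 2 * (1 + Real.log v) := by
        have h1 : Real.log (v+1) ≤ Real.log (2*v) := Real.log_le_log hvp1 (by linarith)
        have h2 : Real.log (2*v) = Real.log 2 + Real.log v :=
          Real.log_mul (by norm_num) (by linarith)
        have h3 : Real.log 2 ≤ 1 := by
          have := Real.log_le_sub_one_of_pos (by norm_num : (0:ℝ) < 2); linarith
        linarith
      have hD6P : (v+1) * Real.sqrt (v+1) * (1 + Real.log (v+1))
          ≤ 6 * (v * Real.sqrt v * (1 + Real.log v)) := by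
        have h1 : (v+1) * Real.sqrt (v+1) ≤ 2*v * (3/2 * Real.sqrt v) := by
          apply mul_le_mul (by linarith) hs2v (by positivity) (by linarith)
        nlinarith [mul_le_mul h1 hlog2v (by linarith : (0:ℝ) ≤ 1 + Real.log (v+1))
          (by positivity : (0:ℝ) ≤ 2*v * (3/2 * Real.sqrt v))]
      have hrhs : 163 / (v * Real.sqrt v * (1 + Real.log v))
          ≤ 4000 * ((1-a) / ((v+1) * Real.sqrt (v+1) * (1 + Real.log (v+1)))) := by
        have hg : (1/2 : ℝ) / (6 * (v * Real.sqrt v * (1 + Real.log v)))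
            ≤ (1-a) / ((v+1) * Real.sqrt (v+1) * (1 + Real.log (v+1))) :=
          div_le_div₀ h1ann h1a hDpos hD6P
        have hg2 : 163 / (v * Real.sqrt v * (1 + Real.log v))
            ≤ 4000 * ((1/2 : ℝ) / (6 * (v * Real.sqrt v * (1 + Real.log v)))) := by
          have he : ((1/2 : ℝ) / (6 * (v * Real.sqrt v * (1 + Real.log v))))
              = 1 / (12 * (v * Real.sqrt v * (1 + Real.log v))) := by
            rw [div_div, show (2:ℝ) * (6 * (v * Real.sqrt v * (1 + Real.log v)))
              = 12 * (v * Real.sqrt v * (1 + Real.log v)) by ring]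
          rw [he, mul_one_div, div_le_div_iff₀ hPpos (by positivity)]
          nlinarith [hPpos]
        calc 163 / (v * Real.sqrt v * (1 + Real.log v))
            ≤ 4000 * ((1/2 : ℝ) / (6 * (v * Real.sqrt v * (1 + Real.log v)))) := hg2
          _ ≤ 4000 * ((1-a) / ((v+1) * Real.sqrt (v+1) * (1 + Real.log (v+1)))) := by linarith
      exact h.trans hrhs
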